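/- Let A be an n×n real diagonal matrix with ‖A‖ = 1 (Frobenius norm), and let A₂,…,A_m be real symmetric n×n matrices that are pairwise orthogonal under the trace inner product and satisfy ‖A₂‖ ≥ ⋯ ≥ ‖A_m‖. Then ∑_{α=2}^m ‖[A, A_α]‖² ≤ ∑_{α=2}^m ‖A_α‖² + ‖A₂‖². -/

import Mathlib

open Finset

lemma graph_bound {n : ℕ} (a : Fin n → ℝ) (E : Finset (Fin n × Fin n))
    (hsym : ∀ p ∈ E, Prod.swap p ∈ E)
    (hne : ∀ p ∈ E, p.1 ≠ p.2) :
    ∑ p ∈ E, (a p.1 - a p.2) ^ 2 ≤ ((E.card : ℝ) + 2) * ∑ i, a i ^ 2 := by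
  classical
  have hEim : E.image Prod.swap = E := by
    apply Finset.eq_of_subset_of_card_le
    · intro p hp
      obtain ⟨q, hq, rfl⟩ := Finset.mem_image.mp hp
      exact hsym q hq
    · rw [Finset.card_image_of_injective _ Prod.swap_injective]
  have hswap : ∀ f : Fin n × Fin n → ℝ,
      ∑ p ∈ E, f p = ∑ p ∈ E, f p.swap := by
    intro f
    conv_lhs => rw [← hEim]
    rw [Finset.sum_image (fun x _ y _ h => Prod.swap_injective h)]
  set d : Fin n → ℕ := fun i => (E.filter fun p => p.1 = i).card with hd
  set c : Fin n → ℝ := fun i => ∑ p ∈ E.filter (fun p => p.1 = i), (a p.1 - a p.2) with hc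
  set S : ℝ := ∑ i, a i ^ 2 with hS
  set Q : ℝ := ∑ p ∈ E, (a p.1 - a p.2) ^ 2 with hQ
  set K : ℝ := (E.card : ℝ) + 2 with hK
  have hS0 : 0 ≤ S := Finset.sum_nonneg fun i _ => sq_nonneg _
  have hQ0 : 0 ≤ Q := Finset.sum_nonneg fun p _ => sq_nonneg _
  have hK0 : (0:ℝ) ≤ K := by rw [hK]; exact add_nonneg (Nat.cast_nonneg _) (by norm_num)
  have hfib : ∀ f : Fin n × Fin n → ℝ,
      ∑ i, ∑ p ∈ E.filter (fun p => p.1 = i), f p = ∑ p ∈ E, f p := by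
    intro f
    exact Finset.sum_fiberwise_of_maps_to (fun p _ => Finset.mem_univ _) f
  -- h1
  have h1 : ∑ i, a i * c i = ∑ p ∈ E, a p.1 * (a p.1 - a p.2) := by
    rw [← hfib (fun p => a p.1 * (a p.1 - a p.2))]
    refine Finset.sum_congr rfl fun i _ => ?_
    rw [hc, Finset.mul_sum]
    refine Finset.sum_congr rfl fun p hp => ?_
    rw [(Finset.mem_filter.mp hp).2]
  -- h2
  have h2 : Q = 2 * ∑ i, a i * c i := by
    rw [h1]
    have hs := hswap (fun p => a p.2 * (a p.1 - a p.2))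
    simp only [Prod.fst_swap, Prod.snd_swap] at hs
    have expand : Q
        = ∑ p ∈ E, a p.1 * (a p.1 - a p.2) - ∑ p ∈ E, a p.2 * (a p.1 - a p.2) := by
      rw [hQ, ← Finset.sum_sub_distrib]
      exact Finset.sum_congr rfl fun p _ => by ring
    rw [expand, hs]
    rw [show ∑ p ∈ E, a p.1 * (a p.2 - a p.1) = - ∑ p ∈ E, a p.1 * (a p.1 - a p.2) by
      rw [← Finset.sum_neg_distrib]
      exact Finset.sum_congr rfl fun p _ => by ring]
    ring
  -- h4
  have h4 : ∑ i, c i ^ 2 ≤ ∑ p ∈ E, (d p.1 : ℝ) * (a p.1 - a p.2) ^ 2 := by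
    rw [← hfib (fun p => (d p.1 : ℝ) * (a p.1 - a p.2) ^ 2)]
    refine Finset.sum_le_sum fun i _ => ?_
    calc c i ^ 2 ≤ (d i : ℝ) * ∑ p ∈ E.filter (fun p => p.1 = i), (a p.1 - a p.2) ^ 2 := by
          have := sq_sum_le_card_mul_sum_sq (s := E.filter (fun p => p.1 = i))
            (f := fun p => a p.1 - a p.2)
          exact_mod_cast this
      _ = ∑ p ∈ E.filter (fun p => p.1 = i), (d i : ℝ) * (a p.1 - a p.2) ^ 2 := by
          rw [Finset.mul_sum]
      _ = ∑ p ∈ E.filter (fun p => p.1 = i), (d p.1 : ℝ) * (a p.1 - a p.2) ^ 2 := by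
          refine Finset.sum_congr rfl fun p hp => ?_
          rw [(Finset.mem_filter.mp hp).2]
  -- h5 : symmetrize
  have h5 : ∑ p ∈ E, (d p.1 : ℝ) * (a p.1 - a p.2) ^ 2
      = ∑ p ∈ E, (d p.2 : ℝ) * (a p.1 - a p.2) ^ 2 := by
    conv_lhs => rw [hswap (fun p => (d p.1 : ℝ) * (a p.1 - a p.2) ^ 2)]
    simp only [Prod.fst_swap, Prod.snd_swap]
    exact Finset.sum_congr rfl fun p _ => by ring
  -- h6 : degree bound
  have h6 : ∀ p ∈ E, 2 * (d p.1 + d p.2) ≤ E.card + 2 := by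
    intro p hp
    obtain ⟨i, j⟩ := p
    have hij : i ≠ j := hne _ hp
    set S₁ : Finset (Fin n × Fin n) := E.filter (fun q => q.1 = i ∨ q.1 = j) with hS₁
    have hcard : S₁.card = d i + d j := by
      rw [hS₁, Finset.filter_or]
      rw [Finset.card_union_of_disjoint]
      intro s h1 h2 q hq
      have e1 := (Finset.mem_filter.mp (h1 hq)).2
      have e2 := (Finset.mem_filter.mp (h2 hq)).2
      exact absurd (e1.symm.trans e2) hij
    set T := S₁.image Prod.swap with hT
    have hTcard : T.card = S₁.card := Finset.card_image_of_injective _ Prod.swap_injective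
    have hTsub : T ⊆ E := by
      intro q hq
      obtain ⟨r, hr, rfl⟩ := Finset.mem_image.mp hq
      exact hsym r (Finset.mem_filter.mp hr).1
    have hS₁sub : S₁ ⊆ E := Finset.filter_subset _ _
    have hinter : S₁ ∩ T ⊆ ({(i, j), (j, i)} : Finset (Fin n × Fin n)) := by
      intro q hq
      have hq1 := Finset.mem_filter.mp (Finset.mem_inter.mp hq).1
      obtain ⟨r, hr, hrq⟩ := Finset.mem_image.mp (Finset.mem_inter.mp hq).2
      have hq2 : q.2 = i ∨ q.2 = j := by
        have := (Finset.mem_filter.mp hr).2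
        rw [← hrq]
        simpa using this
      have hqne : q.1 ≠ q.2 := hne _ hq1.1
      simp only [Finset.mem_insert, Finset.mem_singleton]
      have hq1' := hq1.2
      rcases hq1' with h | h <;> rcases hq2 with h' | h'
      · exact absurd (h.trans h'.symm) hqne
      · left; rw [← h, ← h']
      · right; rw [← h, ← h']
      · exact absurd (h.trans h'.symm) hqne
    have hcard2 : (S₁ ∩ T).card ≤ 2 := by
      calc (S₁ ∩ T).card ≤ ({(i, j), (j, i)} : Finset (Fin n × Fin n)).card :=
            Finset.card_le_card hinter
        _ ≤ 2 := (Finset.card_insert_le _ _).trans (by simp)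
    have hunion : (S₁ ∪ T).card ≤ E.card :=
      Finset.card_le_card (Finset.union_subset hS₁sub hTsub)
    have hkey := Finset.card_union_add_card_inter S₁ T
    simp only [Prod.fst, Prod.snd]
    omega
  -- combine
  have h7 : 4 * ∑ i, c i ^ 2 ≤ K * Q := by
    have hhalf : ∑ p ∈ E, (2 * ((d p.1 : ℝ) + (d p.2 : ℝ))) * (a p.1 - a p.2) ^ 2 ≤ K * Q := by
      rw [hQ, Finset.mul_sum]
      refine Finset.sum_le_sum fun p hp => ?_
      have h6p := h6 p hp
      have hdk : 2 * ((d p.1 : ℝ) + (d p.2 : ℝ)) ≤ K := by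
        rw [hK]
        have h6c : ((2 * (d p.1 + d p.2) : ℕ) : ℝ) ≤ ((E.card + 2 : ℕ) : ℝ) := by
          exact_mod_cast h6p
        push_cast at h6c
        linarith
      exact mul_le_mul_of_nonneg_right hdk (sq_nonneg _)
    have hsplit : ∑ p ∈ E, (2 * ((d p.1 : ℝ) + (d p.2 : ℝ))) * (a p.1 - a p.2) ^ 2
        = 2 * ∑ p ∈ E, (d p.1 : ℝ) * (a p.1 - a p.2) ^ 2
          + 2 * ∑ p ∈ E, (d p.2 : ℝ) * (a p.1 - a p.2) ^ 2 := by
      rw [Finset.mul_sum, Finset.mul_sum, ← Finset.sum_add_distrib]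
      exact Finset.sum_congr rfl fun p _ => by ring
    have h4' := h4
    rw [h5] at h4'
    rw [hsplit] at hhalf
    linarith
  have hC : (∑ i, a i * c i) ^ 2 ≤ S * ∑ i, c i ^ 2 := by
    have := Finset.sum_mul_sq_le_sq_mul_sq Finset.univ a c
    simpa [hS] using this
  have hQ2 : Q ^ 2 ≤ S * (K * Q) := by
    have : Q ^ 2 = 4 * (∑ i, a i * c i) ^ 2 := by rw [h2]; ring
    calc Q ^ 2 = 4 * (∑ i, a i * c i) ^ 2 := this
      _ ≤ 4 * (S * ∑ i, c i ^ 2) := by linarith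
      _ = S * (4 * ∑ i, c i ^ 2) := by ring
      _ ≤ S * (K * Q) := mul_le_mul_of_nonneg_left h7 hS0
  rcases eq_or_lt_of_le hQ0 with h | h
  · rw [← h]; exact mul_nonneg hK0 hS0
  · have hQQ : Q * Q ≤ (K * S) * Q := by
      calc Q * Q = Q ^ 2 := (sq Q).symm
        _ ≤ S * (K * Q) := hQ2
        _ = (K * S) * Q := by ring
    exact le_of_mul_le_mul_right hQQ h

open Finset RealInnerProductSpace

lemma entry_bound {n m : ℕ} (hm : 0 < m) (B : Fin m → Matrix (Fin n) (Fin n) ℝ)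
    (hsymm : ∀ α, (B α).IsSymm)
    (horth : ∀ α β, α ≠ β → ∑ i, ∑ j, B α i j * B β i j = 0)
    (hmono : Antitone fun α => ∑ i, ∑ j, (B α i j) ^ 2)
    (i j : Fin n) (hij : i ≠ j) :
    ∑ α, 2 * (B α i j) ^ 2 ≤ ∑ i', ∑ j', (B ⟨0, hm⟩ i' j') ^ 2 := by
  classical
  set φ : Fin m → EuclideanSpace ℝ (Fin n × Fin n) := fun α => WithLp.toLp 2 (fun p : Fin n × Fin n => B α p.1 p.2) with hφ
  have hinner : ∀ α β, (inner ℝ (φ α) (φ β) : ℝ) = ∑ i', ∑ j', B α i' j' * B β i' j' := by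
    intro α β
    rw [PiLp.inner_apply, Fintype.sum_prod_type]
    simp only [RCLike.inner_apply, conj_trivial]
    exact Finset.sum_congr rfl fun _ _ => Finset.sum_congr rfl fun _ _ => mul_comm _ _
  have hnorm : ∀ α, ‖φ α‖ ^ 2 = ∑ i', ∑ j', (B α i' j') ^ 2 := by
    intro α
    rw [← real_inner_self_eq_norm_sq, hinner]
    simp_rw [sq]
  set N : Fin m → ℝ := fun α => ∑ i', ∑ j', (B α i' j') ^ 2 with hN
  have hN0 : ∀ α, 0 ≤ N α := fun α =>
    Finset.sum_nonneg fun _ _ => Finset.sum_nonneg fun _ _ => sq_nonneg _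
  have hNtop : ∀ α, N α ≤ N ⟨0, hm⟩ := fun α => hmono (by exact Fin.mk_le_of_le_val (Nat.zero_le _))
  -- orthonormal family on nonzero vectors
  set v : {α : Fin m // φ α ≠ 0} → EuclideanSpace ℝ (Fin n × Fin n) :=
    fun α => ‖φ α.1‖⁻¹ • φ α.1 with hv
  have hon : Orthonormal ℝ v := by
    rw [orthonormal_iff_ite]
    intro α β
    rw [hv]
    simp only [real_inner_smul_left, real_inner_smul_right]
    by_cases h : α = β
    · subst h
      simp only [if_pos rfl, ↓reduceIte]
      rw [real_inner_self_eq_norm_sq]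
      have hn : ‖φ α.1‖ ≠ 0 := norm_ne_zero_iff.mpr α.2
      field_simp
      try rw [sq]
    · rw [if_neg h]
      have hne : α.1 ≠ β.1 := fun hh => h (Subtype.ext hh)
      rw [hinner, horth _ _ hne]
      ring
  set x : EuclideanSpace ℝ (Fin n × Fin n) :=
    EuclideanSpace.single (i, j) (1:ℝ) + EuclideanSpace.single (j, i) (1:ℝ) with hx
  have hxφ : ∀ α, (inner ℝ x (φ α) : ℝ) = 2 * B α i j := by
    intro α
    rw [hx, inner_add_left]
    rw [EuclideanSpace.inner_single_left, EuclideanSpace.inner_single_left]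
    have : φ α (j, i) = B α i j := by
      show B α j i = B α i j
      rw [← (hsymm α).apply i j]
    simp only [starRingEnd_apply, star_trivial, one_mul]
    show φ α (i, j) + φ α (j, i) = 2 * B α i j
    rw [this]
    show B α i j + B α i j = 2 * B α i j
    ring
  have hxnorm : ‖x‖ ^ 2 = 2 := by
    rw [← real_inner_self_eq_norm_sq, hx]
    rw [inner_add_left, inner_add_right, inner_add_right]
    rw [EuclideanSpace.inner_single_left, EuclideanSpace.inner_single_left,
      EuclideanSpace.inner_single_left, EuclideanSpace.inner_single_left]
    simp only [starRingEnd_apply, star_trivial, one_mul]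
    rw [EuclideanSpace.single_apply, EuclideanSpace.single_apply,
      EuclideanSpace.single_apply, EuclideanSpace.single_apply]
    have h1 : ((i,j) : Fin n × Fin n) ≠ (j,i) := by
      intro h; exact hij (congrArg Prod.fst h)
    rw [if_pos rfl, if_pos rfl, if_neg h1, if_neg (Ne.symm h1)]
    norm_num
  have hbessel := hon.sum_inner_products_le (s := Finset.univ) x
  -- translate bessel
  have hterm : ∀ α : {α : Fin m // φ α ≠ 0},
      ‖(inner ℝ (v α) x : ℝ)‖ ^ 2 = (‖φ α.1‖ ^ 2)⁻¹ * (2 * B α.1 i j) ^ 2 := by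
    intro α
    rw [hv]
    simp only [real_inner_smul_left]
    rw [real_inner_comm, hxφ]
    rw [norm_mul, mul_pow, norm_inv, norm_norm]
    rw [← inv_pow]
    congr 1
    rw [Real.norm_eq_abs, sq_abs]
  rw [hxnorm] at hbessel
  simp_rw [hterm] at hbessel
  -- now conclude
  have key : ∀ α : Fin m, 2 * (B α i j) ^ 2 ≤
      (N ⟨0, hm⟩ / 2) * (if φ α = 0 then 0 else (‖φ α‖ ^ 2)⁻¹ * (2 * B α i j) ^ 2) := by
    intro α
    by_cases h : φ α = 0
    · rw [if_pos h]
      have : B α i j = 0 := by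
        have := congrArg (fun w : EuclideanSpace ℝ (Fin n × Fin n) => w (i, j)) h
        exact this
      rw [this]
      norm_num
    · rw [if_neg h]
      have hpos : 0 < ‖φ α‖ ^ 2 := by
        have := norm_pos_iff.mpr h
        positivity
      have hne0 : ‖φ α‖ ^ 2 ≠ 0 := ne_of_gt hpos
      have hNα : N α = ‖φ α‖ ^ 2 := (hnorm α).symm
      have hratio : (1:ℝ) ≤ N ⟨0, hm⟩ / ‖φ α‖ ^ 2 := by
        rw [le_div_iff₀ hpos, one_mul, ← hNα]
        exact hNtop α
      calc 2 * (B α i j) ^ 2 = 1 * (2 * (B α i j) ^ 2) := by ring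
        _ ≤ (N ⟨0, hm⟩ / ‖φ α‖ ^ 2) * (2 * (B α i j) ^ 2) :=
            mul_le_mul_of_nonneg_right hratio (by positivity)
        _ = N ⟨0, hm⟩ / 2 * ((‖φ α‖ ^ 2)⁻¹ * (2 * B α i j) ^ 2) := by
            field_simp
  calc ∑ α, 2 * (B α i j) ^ 2
      ≤ ∑ α, (N ⟨0, hm⟩ / 2) * (if φ α = 0 then 0 else (‖φ α‖ ^ 2)⁻¹ * (2 * B α i j) ^ 2) :=
        Finset.sum_le_sum fun α _ => key α
    _ = (N ⟨0, hm⟩ / 2) * ∑ α, (if φ α = 0 then 0 else (‖φ α‖ ^ 2)⁻¹ * (2 * B α i j) ^ 2) := by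
        rw [Finset.mul_sum]
    _ ≤ (N ⟨0, hm⟩ / 2) * 2 := by
        refine mul_le_mul_of_nonneg_left ?_ (by positivity)
        have hsub : ∑ α, (if φ α = 0 then 0 else (‖φ α‖ ^ 2)⁻¹ * (2 * B α i j) ^ 2)
            = ∑ α : {α : Fin m // φ α ≠ 0}, (‖φ α.1‖ ^ 2)⁻¹ * (2 * B α.1 i j) ^ 2 := by
          rw [Finset.sum_ite, Finset.sum_const_zero, zero_add]
          exact Finset.sum_subtype _ (by simp) _
        rw [hsub]
        exact hbessel
    _ = N ⟨0, hm⟩ := by ring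

theorem stmt_5 (n m : ℕ) (hm : 0 < m)
    (A : Matrix (Fin n) (Fin n) ℝ) (hA : A.IsDiag)
    (hAnorm : ∑ i, ∑ j, (A i j) ^ 2 = 1)
    (B : Fin m → Matrix (Fin n) (Fin n) ℝ)
    (hsymm : ∀ α, (B α).IsSymm)
    (horth : ∀ α β, α ≠ β → ∑ i, ∑ j, B α i j * B β i j = 0)
    (hmono : Antitone fun α => ∑ i, ∑ j, (B α i j) ^ 2) :
    ∑ α, ∑ i, ∑ j, ((A * B α - B α * A) i j) ^ 2 ≤
      (∑ α, ∑ i, ∑ j, (B α i j) ^ 2) + ∑ i, ∑ j, (B ⟨0, hm⟩ i j) ^ 2 := by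
  classical
  set a : Fin n → ℝ := fun i => A i i with ha
  set N0 : ℝ := ∑ i, ∑ j, (B ⟨0, hm⟩ i j) ^ 2 with hN0def
  have hN0nonneg : 0 ≤ N0 :=
    Finset.sum_nonneg fun _ _ => Finset.sum_nonneg fun _ _ => sq_nonneg _
  -- diagonal norm
  have hanorm : ∑ i, a i ^ 2 = 1 := by
    rw [← hAnorm]
    refine Finset.sum_congr rfl fun i _ => ?_
    rw [Finset.sum_eq_single i]
    · intro j _ hji
      rw [hA (Ne.symm hji)]
      norm_num
    · intro h; exact absurd (Finset.mem_univ i) h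
  -- commutator entries
  have hcomm : ∀ α i j, (A * B α - B α * A) i j = (a i - a j) * B α i j := by
    intro α i j
    simp only [Matrix.sub_apply, Matrix.mul_apply]
    rw [Finset.sum_eq_single i, Finset.sum_eq_single j]
    · ring
    · intro k _ hk
      rw [hA hk]
      ring
    · intro h; exact absurd (Finset.mem_univ j) h
    · intro k _ hk
      rw [hA (Ne.symm hk)]
      ring
    · intro h; exact absurd (Finset.mem_univ i) h
  -- pointwise bound
  have hpt : ∀ α i j, ((A * B α - B α * A) i j) ^ 2
      ≤ (B α i j) ^ 2 + max ((a i - a j) ^ 2 - 1) 0 * (B α i j) ^ 2 := by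
    intro α i j
    rw [hcomm α i j, mul_pow]
    have h1 : (a i - a j) ^ 2 * (B α i j) ^ 2
        = (B α i j) ^ 2 + ((a i - a j) ^ 2 - 1) * (B α i j) ^ 2 := by ring
    rw [h1]
    exact add_le_add (le_refl _)
      (mul_le_mul_of_nonneg_right (le_max_left _ _) (sq_nonneg _))
  -- sum the pointwise bound
  have hsum1 : ∑ α, ∑ i, ∑ j, ((A * B α - B α * A) i j) ^ 2
      ≤ (∑ α, ∑ i, ∑ j, (B α i j) ^ 2)
        + ∑ i, ∑ j, max ((a i - a j) ^ 2 - 1) 0 * ∑ α, (B α i j) ^ 2 := by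
    have step : ∑ α, ∑ i, ∑ j, ((A * B α - B α * A) i j) ^ 2
        ≤ ∑ α, ∑ i, ∑ j,
            ((B α i j) ^ 2 + max ((a i - a j) ^ 2 - 1) 0 * (B α i j) ^ 2) := by
      refine Finset.sum_le_sum fun α _ => ?_
      refine Finset.sum_le_sum fun i _ => ?_
      exact Finset.sum_le_sum fun j _ => hpt α i j
    refine step.trans (le_of_eq ?_)
    simp_rw [Finset.sum_add_distrib]
    congr 1
    rw [Finset.sum_comm]
    refine Finset.sum_congr rfl fun i _ => ?_
    rw [Finset.sum_comm]
    refine Finset.sum_congr rfl fun j _ => ?_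
    rw [Finset.mul_sum]
  -- bound the entry sums via Bessel
  have hsum2 : ∑ i, ∑ j, max ((a i - a j) ^ 2 - 1) 0 * ∑ α, (B α i j) ^ 2
      ≤ ∑ i, ∑ j, max ((a i - a j) ^ 2 - 1) 0 * (N0 / 2) := by
    refine Finset.sum_le_sum fun i _ => Finset.sum_le_sum fun j _ => ?_
    by_cases hij : i = j
    · subst hij
      have : ((a i - a i) ^ 2 - 1 : ℝ) = -1 := by ring
      rw [this, max_eq_right (by norm_num : (-1:ℝ) ≤ 0)]
      simp
    · refine mul_le_mul_of_nonneg_left ?_ (le_max_right _ _)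
      have hb := entry_bound hm B hsymm horth hmono i j hij
      rw [show (∑ α, 2 * (B α i j) ^ 2) = 2 * ∑ α, (B α i j) ^ 2 from
        (Finset.mul_sum _ _ _).symm] at hb
      rw [← hN0def] at hb
      linarith
  -- the graph bound
  have hsum3 : ∑ i, ∑ j, max ((a i - a j) ^ 2 - 1) 0 ≤ 2 := by
    set E : Finset (Fin n × Fin n) :=
      Finset.univ.filter (fun p : Fin n × Fin n => p.1 ≠ p.2 ∧ 1 < (a p.1 - a p.2) ^ 2) with hE
    have hsym : ∀ p ∈ E, Prod.swap p ∈ E := by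
      intro p hp
      rw [hE, Finset.mem_filter] at hp ⊢
      refine ⟨Finset.mem_univ _, Ne.symm hp.2.1, ?_⟩
      have : (a p.swap.1 - a p.swap.2) ^ 2 = (a p.1 - a p.2) ^ 2 := by
        simp only [Prod.fst_swap, Prod.snd_swap]
        ring
      rw [this]
      exact hp.2.2
    have hne : ∀ p ∈ E, p.1 ≠ p.2 := by
      intro p hp
      exact ((Finset.mem_filter.mp hp).2).1
    have hgraph := graph_bound a E hsym hne
    rw [hanorm, mul_one] at hgraph
    have hsplit : ∑ i, ∑ j, max ((a i - a j) ^ 2 - 1) 0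
        = ∑ p ∈ E, ((a p.1 - a p.2) ^ 2 - 1) := by
      rw [← Fintype.sum_prod_type']
      rw [← Finset.sum_filter_add_sum_filter_not Finset.univ
        (fun p : Fin n × Fin n => p.1 ≠ p.2 ∧ 1 < (a p.1 - a p.2) ^ 2)]
      have hzero : ∑ p ∈ Finset.univ.filter
          (fun p : Fin n × Fin n => ¬(p.1 ≠ p.2 ∧ 1 < (a p.1 - a p.2) ^ 2)),
          max ((a p.1 - a p.2) ^ 2 - 1) 0 = 0 := by
        refine Finset.sum_eq_zero fun p hp => ?_
        have hp' := (Finset.mem_filter.mp hp).2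
        rw [max_eq_right]
        by_cases h : p.1 = p.2
        · rw [h]
          norm_num
        · have : ¬ 1 < (a p.1 - a p.2) ^ 2 := fun hlt => hp' ⟨h, hlt⟩
          linarith [not_lt.mp this]
      rw [hzero, add_zero]
      refine Finset.sum_congr rfl fun p hp => ?_
      have hp' := (Finset.mem_filter.mp hp).2
      exact max_eq_left (by linarith [hp'.2])
    rw [hsplit]
    have : ∑ p ∈ E, ((a p.1 - a p.2) ^ 2 - 1)
        = (∑ p ∈ E, (a p.1 - a p.2) ^ 2) - E.card := by
      rw [Finset.sum_sub_distrib]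
      simp
    rw [this]
    linarith
  -- combine everything
  have hfinal : ∑ i, ∑ j, max ((a i - a j) ^ 2 - 1) 0 * (N0 / 2) ≤ N0 := by
    have : ∑ i, ∑ j, max ((a i - a j) ^ 2 - 1) 0 * (N0 / 2)
        = (∑ i, ∑ j, max ((a i - a j) ^ 2 - 1) 0) * (N0 / 2) := by
      rw [Finset.sum_mul]
      refine Finset.sum_congr rfl fun i _ => ?_
      rw [Finset.sum_mul]
    rw [this]
    calc (∑ i, ∑ j, max ((a i - a j) ^ 2 - 1) 0) * (N0 / 2)
        ≤ 2 * (N0 / 2) := mul_le_mul_of_nonneg_right hsum3 (by positivity)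
      _ = N0 := by ring
  calc ∑ α, ∑ i, ∑ j, ((A * B α - B α * A) i j) ^ 2
      ≤ (∑ α, ∑ i, ∑ j, (B α i j) ^ 2)
        + ∑ i, ∑ j, max ((a i - a j) ^ 2 - 1) 0 * ∑ α, (B α i j) ^ 2 := hsum1
    _ ≤ (∑ α, ∑ i, ∑ j, (B α i j) ^ 2)
        + ∑ i, ∑ j, max ((a i - a j) ^ 2 - 1) 0 * (N0 / 2) := by linarith
    _ ≤ (∑ α, ∑ i, ∑ j, (B α i j) ^ 2) + N0 := by linarith
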